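/- arXiv:2108.06673 — 5 statements merged into one kernel-verified Lean document; each statement's English description precedes it below -/
import Mathlib

section
/- Let (I,(·,·)) be a Cartan datum and σ an admissible diagram automorphism of it. Then the induced pair on the set of σ-orbits is again a Cartan datum: for every σ-orbit η, (α_η,α_η)_1 is a positive even integer, and for every pair of distinct σ-orbits η ≠ η' the number a_{ηη'} := 2(α_η,α_{η'})_1/(α_η,α_η)_1 is a nonpositive integer; moreover, for any fixed i ∈ η one has a_{ηη'} = Σ_{j∈η'} a_{ij}. -/
noncomputable section

open Finset

/-- The `σ`-orbit of `i`, as a `Finset`. -/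
def orbitF {I : Type} [Fintype I] [DecidableEq I] (σ : Equiv.Perm I) (i : I) : Finset I :=
  Finset.univ.filter (fun j => σ.SameCycle i j)

/-- for a Cartan datum `(I,(·,·))` with an admissible diagram automorphism
`σ`, the induced pair on the set of `σ`-orbits is again a Cartan datum: for every orbit
`η` (the orbit of `i`), `(α_η,α_η)_1 = |η|·(α_i,α_i)` is a positive even integer; for
distinct orbits `η ≠ η'` the number `a_{ηη'} = 2(α_η,α_{η'})_1/(α_η,α_η)_1` is a
nonpositive integer; and for any fixed `i ∈ η`, `a_{ηη'} = Σ_{j∈η'} a_{ij}`. -/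
theorem stmt0 {I : Type} [Fintype I] [DecidableEq I] [Nonempty I]
    (form : I → I → ℤ)
    (hsymm : ∀ i j, form i j = form j i)
    (hdiag_pos : ∀ i, 0 < form i i) (hdiag_even : ∀ i, 2 ∣ form i i)
    (hoff : ∀ i j, i ≠ j → 2 * form i j ≤ 0 ∧ form i i ∣ 2 * form i j)
    (σ : Equiv.Perm I)
    (hform : ∀ i j, form (σ i) (σ j) = form i j)
    (hadm : ∀ i j, i ≠ j → σ.SameCycle i j → form i j = 0) :
    -- (α_η,α_η)_1 is a positive even integer
    (∀ i : I, 0 < (orbitF σ i).card * form i i ∧ 2 ∣ (orbitF σ i).card * form i i) ∧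
    -- for η ≠ η', a_{ηη'} = 2(α_η,α_{η'})_1/(α_η,α_η)_1 is a nonpositive integer,
    -- and for fixed i ∈ η it equals Σ_{j∈η'} a_{ij}
    (∀ i i' : I, ¬ σ.SameCycle i i' →
      2 * (∑ a ∈ orbitF σ i, ∑ b ∈ orbitF σ i', form a b) ≤ 0 ∧
      ((orbitF σ i).card * form i i) ∣
        2 * (∑ a ∈ orbitF σ i, ∑ b ∈ orbitF σ i', form a b) ∧
      2 * (∑ a ∈ orbitF σ i, ∑ b ∈ orbitF σ i', form a b) /
          ((orbitF σ i).card * form i i) =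
        ∑ j ∈ orbitF σ i', 2 * form i j / form i i) := by
  -- form is invariant under integer powers of σ
  have hpow : ∀ (n : ℕ) (i j : I), form ((σ ^ n) i) ((σ ^ n) j) = form i j := by
    intro n
    induction n with
    | zero => intro i j; simp
    | succ n ih =>
      intro i j
      rw [pow_succ, Equiv.Perm.mul_apply, Equiv.Perm.mul_apply, ih, hform]
  have hzpow : ∀ (k : ℤ) (i j : I), form ((σ ^ k) i) ((σ ^ k) j) = form i j := by
    intro k i j
    cases k with
    | ofNat n => simpa using hpow n i j
    | negSucc n =>
      have := hpow (n+1) ((σ ^ (Int.negSucc n)) i) ((σ ^ (Int.negSucc n)) j)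
      rw [← this]
      congr 1 <;>
      · rw [← Equiv.Perm.mul_apply, ← zpow_natCast, ← zpow_add,
          show (((n + 1 : ℕ):ℤ) + Int.negSucc n) = 0 by simp [Int.negSucc_eq]]
        simp
  have hmemself : ∀ i : I, i ∈ orbitF σ i := by
    intro i; simp [orbitF, Equiv.Perm.SameCycle.refl]
  have hcardpos : ∀ i : I, 0 < (orbitF σ i).card := fun i =>
    Finset.card_pos.2 ⟨i, hmemself i⟩
  constructor
  · intro i
    have hc : (0:ℤ) < (orbitF σ i).card := by exact_mod_cast hcardpos i
    exact ⟨mul_pos hc (hdiag_pos i), (hdiag_even i).mul_left _⟩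
  · intro i i' hne
    -- each row sum equals the row sum for i
    have key : ∀ j ∈ orbitF σ i, (∑ b ∈ orbitF σ i', form j b) = ∑ b ∈ orbitF σ i', form i b := by
      intro j hj
      simp only [orbitF, mem_filter, mem_univ, true_and] at hj
      obtain ⟨k, hk⟩ := hj
      rw [← hk]
      refine (Finset.sum_equiv (σ ^ k)⁻¹ ?_ ?_)
      · intro b
        simp only [orbitF, mem_filter, mem_univ, true_and]
        constructor
        · intro h
          exact h.trans ⟨-k, by simp [zpow_neg]⟩
        · intro h
          refine h.trans ⟨k, ?_⟩
          simp
      · intro b _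
        have : form ((σ ^ k) i) ((σ ^ k) ((σ ^ k)⁻¹ b)) = form i ((σ ^ k)⁻¹ b) :=
          hzpow k i ((σ ^ k)⁻¹ b)
        simpa using this
    have hsum : (∑ a ∈ orbitF σ i, ∑ b ∈ orbitF σ i', form a b)
        = ((orbitF σ i).card : ℤ) * ∑ b ∈ orbitF σ i', form i b := by
      rw [Finset.sum_congr rfl key, Finset.sum_const, nsmul_eq_mul]
    set C := ∑ b ∈ orbitF σ i', form i b with hC
    have hij : ∀ j ∈ orbitF σ i', i ≠ j := by
      intro j hj heq
      simp only [orbitF, mem_filter, mem_univ, true_and] at hj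
      subst heq
      exact hne hj.symm
    have h2C_le : 2 * C ≤ 0 := by
      rw [hC, Finset.mul_sum]
      exact Finset.sum_nonpos fun j hj => (hoff i j (hij j hj)).1
    have h2C_dvd : form i i ∣ 2 * C := by
      rw [hC, Finset.mul_sum]
      exact Finset.dvd_sum fun j hj => (hoff i j (hij j hj)).2
    have hcZ : (0:ℤ) < (orbitF σ i).card := by exact_mod_cast hcardpos i
    refine ⟨?_, ?_, ?_⟩
    · rw [hsum]
      calc 2 * (((orbitF σ i).card : ℤ) * C) = ((orbitF σ i).card : ℤ) * (2 * C) := by ring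
        _ ≤ 0 := mul_nonpos_of_nonneg_of_nonpos hcZ.le h2C_le
    · rw [hsum]
      have : 2 * (((orbitF σ i).card : ℤ) * C) = ((orbitF σ i).card : ℤ) * (2 * C) := by ring
      rw [this]
      exact mul_dvd_mul_left _ h2C_dvd
    · rw [hsum]
      have h1 : 2 * (((orbitF σ i).card : ℤ) * C) = ((orbitF σ i).card : ℤ) * (2 * C) := by ring
      rw [h1, Int.mul_ediv_mul_of_pos _ _ hcZ]
      -- now 2*C / form i i = ∑ 2 form i j / form i i
      have hne0 : form i i ≠ 0 := (hdiag_pos i).ne'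
      have : 2 * C = form i i * ∑ j ∈ orbitF σ i', 2 * form i j / form i i := by
        rw [hC, Finset.mul_sum, Finset.mul_sum]
        refine Finset.sum_congr rfl fun j hj => ?_
        rw [Int.mul_ediv_cancel' (hoff i j (hij j hj)).2]
      rw [this, Int.mul_ediv_cancel_left _ hne0]
end
end

section
/- Let (I,(·,·)) be a Cartan datum, σ an admissible diagram automorphism of it, and m ≥ 1 an integer; set τ = σ^m. Then: (i) τ is an admissible diagram automorphism of (I,(·,·)); (ii) σ maps each τ-orbit onto a τ-orbit, hence induces a permutation σ̄ of the set I^τ of τ-orbits; and (iii) σ̄ is an admissible diagram automorphism of the induced Cartan datum X^τ = (I^τ, (·,·)_τ) (i.e. σ̄ preserves the induced form (·,·)_τ, and (α_γ,α_{γ'})_τ = 0 for distinct τ-orbits γ ≠ γ' lying in a common σ̄-orbit). -/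
noncomputable section

open Finset

/-- The induced form `(·,·)_τ` on `τ`-orbits, evaluated on the orbits of `i` and `j`:
`(α_γ,α_γ)_τ = |γ|·(α_i,α_i)` for `γ = γ'`, and
`(α_γ,α_{γ'})_τ = Σ_{a∈γ, b∈γ'} (α_a,α_b)` for `γ ≠ γ'`. -/
def inducedForm {I : Type} [Fintype I] [DecidableEq I] (form : I → I → ℤ)
    (τ : Equiv.Perm I) (i j : I) : ℤ :=
  if τ.SameCycle i j then (orbitF τ i).card * form i i
  else ∑ a ∈ orbitF τ i, ∑ b ∈ orbitF τ j, form a b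

/-- for a Cartan datum `(I,(·,·))` with an admissible diagram automorphism
`σ` and `m ≥ 1`, setting `τ = σ^m`: (i) `τ` is an admissible diagram automorphism;
(ii) `σ` maps each `τ`-orbit onto a `τ`-orbit, hence induces a permutation `σ̄` of the
set of `τ`-orbits; (iii) `σ̄` is an admissible diagram automorphism of the induced
Cartan datum `X^τ`: it preserves the induced form `(·,·)_τ`, and `(α_γ,α_{γ'})_τ = 0`
for distinct `τ`-orbits `γ ≠ γ'` in a common `σ̄`-orbit. -/
theorem stmt1 {I : Type} [Fintype I] [DecidableEq I] [Nonempty I]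
    (form : I → I → ℤ)
    (hsymm : ∀ i j, form i j = form j i)
    (hdiag_pos : ∀ i, 0 < form i i) (hdiag_even : ∀ i, 2 ∣ form i i)
    (hoff : ∀ i j, i ≠ j → 2 * form i j ≤ 0 ∧ form i i ∣ 2 * form i j)
    (σ : Equiv.Perm I)
    (hform : ∀ i j, form (σ i) (σ j) = form i j)
    (hadm : ∀ i j, i ≠ j → σ.SameCycle i j → form i j = 0)
    (m : ℕ) (hm : 1 ≤ m) :
    -- (i) τ = σ^m is an admissible diagram automorphism
    (∀ i j, form ((σ ^ m) i) ((σ ^ m) j) = form i j) ∧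
    (∀ i j, i ≠ j → (σ ^ m).SameCycle i j → form i j = 0) ∧
    -- (ii) σ maps each τ-orbit onto a τ-orbit (hence induces a permutation σ̄ of I^τ)
    (∀ i, (orbitF (σ ^ m) i).image σ = orbitF (σ ^ m) (σ i)) ∧
    -- (iii) σ̄ preserves the induced form (·,·)_τ ...
    (∀ i j, inducedForm form (σ ^ m) (σ i) (σ j) = inducedForm form (σ ^ m) i j) ∧
    -- ... and is admissible: distinct τ-orbits in a common σ̄-orbit pair to 0
    (∀ i j, ¬ (σ ^ m).SameCycle i j →
      (∃ nz : ℤ, (σ ^ m).SameCycle ((σ ^ nz) i) j) →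
      inducedForm form (σ ^ m) i j = 0) := by

  -- preliminary facts
  have hformpow : ∀ (n : ℕ) (i j : I), form ((σ ^ n) i) ((σ ^ n) j) = form i j := by
    intro n
    induction n with
    | zero => intro i j; simp
    | succ k ih =>
      intro i j
      have h1 : (σ ^ (k + 1)) i = (σ ^ k) (σ i) := by
        rw [pow_succ]; rfl
      have h2 : (σ ^ (k + 1)) j = (σ ^ k) (σ j) := by
        rw [pow_succ]; rfl
      rw [h1, h2, ih (σ i) (σ j), hform]
  have hsc : ∀ i j : I, (σ ^ m).SameCycle i j → σ.SameCycle i j := by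
    rintro i j ⟨k, hk⟩
    refine ⟨(m : ℤ) * k, ?_⟩
    rw [zpow_mul, zpow_natCast]
    exact hk
  have hcomm : ∀ (k : ℤ) (x : I), ((σ ^ m) ^ k) (σ x) = σ (((σ ^ m) ^ k) x) := by
    intro k x
    have h : Commute σ ((σ ^ m) ^ k) := ((Commute.refl σ).pow_right m).zpow_right k
    exact (DFunLike.congr_fun h.eq x).symm
  have hconj : ∀ i j : I, (σ ^ m).SameCycle (σ i) (σ j) ↔ (σ ^ m).SameCycle i j := by
    intro i j
    constructor
    · rintro ⟨k, hk⟩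
      refine ⟨k, σ.injective ?_⟩
      rw [← hcomm k i]; exact hk
    · rintro ⟨k, hk⟩
      exact ⟨k, by rw [hcomm k i, hk]⟩
  have hmem : ∀ (τ : Equiv.Perm I) (i x : I), x ∈ orbitF τ i ↔ τ.SameCycle i x := by
    intro τ i x; simp [orbitF]
  have himg : ∀ i : I, (orbitF (σ ^ m) i).image σ = orbitF (σ ^ m) (σ i) := by
    intro i
    ext x
    rw [Finset.mem_image]
    simp only [hmem]
    constructor
    · rintro ⟨j, hj, rfl⟩
      exact (hconj i j).mpr hj
    · intro h
      refine ⟨σ⁻¹ x, (hconj i (σ⁻¹ x)).mp ?_, by simp⟩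
      simpa using h
  refine ⟨hformpow m, ?_, himg, ?_, ?_⟩
  · intro i j hne h
    exact hadm i j hne (hsc i j h)
  · intro i j
    by_cases h : (σ ^ m).SameCycle i j
    · rw [inducedForm, inducedForm, if_pos ((hconj i j).mpr h), if_pos h,
        ← himg i, Finset.card_image_of_injective _ σ.injective, hform]
    · rw [inducedForm, inducedForm, if_neg (fun hc => h ((hconj i j).mp hc)), if_neg h,
        ← himg i, ← himg j, Finset.sum_image (fun a _ b _ h => σ.injective h)]
      refine Finset.sum_congr rfl fun a _ => ?_
      rw [Finset.sum_image (fun a _ b _ h => σ.injective h)]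
      exact Finset.sum_congr rfl fun b _ => hform a b
  · rintro i j hne ⟨n, hn⟩
    rw [inducedForm, if_neg hne]
    refine Finset.sum_eq_zero fun a ha => Finset.sum_eq_zero fun b hb => ?_
    rw [hmem] at ha hb
    have hab : a ≠ b := by
      rintro rfl
      exact hne (ha.trans hb.symm)
    have hcyc : σ.SameCycle a b := by
      have h1 : σ.SameCycle i ((σ ^ n) i) := ⟨n, rfl⟩
      exact ((hsc i a ha).symm.trans (h1.trans ((hsc _ j hn).trans (hsc j b hb))))
    exact hadm a b hab hcyc
end
end

section
/- Let (I,(·,·)) be a Cartan datum, σ an admissible diagram automorphism, m ≥ 1, τ = σ^m, and let σ̄ be the permutation induced by σ on the set I^τ of τ-orbits, acting on the induced Cartan datum X^τ = (I^τ,(·,·)_τ). Then the map sending the τ-orbit of i to the σ-orbit of i induces a bijection between the set of σ̄-orbits on I^τ and the set of σ-orbits on I, and under this bijection the Cartan datum induced from (X^τ, σ̄) coincides with the Cartan datum induced from ((I,(·,·)), σ): for all corresponding orbits, (α_{η̃},α_{η̃})_2 = (α_η,α_η)_1 and (α_{η̃},α_{η̃'})_2 = (α_η,α_{η'})_1, where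 (·,·)_2 is the form induced from (X^τ,σ̄) and (·,·)_1 the form induced from ((I,(·,·)),σ). -/
noncomputable section

open Finset

/-- The `σ̄`-orbit of the `τ`-orbit of `i`, as a `Finset` of `Finset`s: it is the set of
`τ`-orbits of the points of the `σ`-orbit of `i`. -/
def orbitBar {I : Type} [Fintype I] [DecidableEq I] (σ τ : Equiv.Perm I) (i : I) :
    Finset (Finset I) :=
  (orbitF σ i).image (orbitF τ)

section Aux

variable {I : Type} [Fintype I] [DecidableEq I]

lemma mem_orbitF {σ : Equiv.Perm I} {i j : I} : j ∈ orbitF σ i ↔ σ.SameCycle i j := by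
  simp [orbitF]

lemma orbitF_eq_iff {σ : Equiv.Perm I} {i j : I} :
    orbitF σ i = orbitF σ j ↔ σ.SameCycle i j := by
  constructor
  · intro h
    have : j ∈ orbitF σ i := h ▸ mem_orbitF.2 (Equiv.Perm.SameCycle.refl σ j)
    exact mem_orbitF.1 this
  · intro h
    ext x
    simp only [mem_orbitF]
    exact ⟨fun hx => h.symm.trans hx, fun hx => h.trans hx⟩

omit [Fintype I] [DecidableEq I] in
lemma sameCycle_of_pow {σ : Equiv.Perm I} {m : ℕ} {i j : I}
    (h : (σ ^ m).SameCycle i j) : σ.SameCycle i j := by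
  obtain ⟨n, hn⟩ := h
  exact ⟨m * n, by rw [zpow_mul, zpow_natCast]; exact hn⟩

lemma orbitF_apply_comm {σ τ : Equiv.Perm I} (h : Commute σ τ) (k : I) :
    orbitF τ (σ k) = (orbitF τ k).image σ := by
  ext j
  simp only [Finset.mem_image, mem_orbitF]
  have hpt : ∀ n : ℤ, σ ((τ ^ n) k) = (τ ^ n) (σ k) := by
    intro n
    have hc : σ * (τ ^ n) = (τ ^ n) * σ := (h.zpow_right n).eq
    have := congrArg (fun π : Equiv.Perm I => π k) hc
    simpa [Equiv.Perm.mul_apply] using this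
  constructor
  · rintro ⟨n, hn⟩
    exact ⟨(τ ^ n) k, ⟨n, rfl⟩, (hpt n).trans hn⟩
  · rintro ⟨a, ⟨n, rfl⟩, rfl⟩
    exact ⟨n, (hpt n).symm⟩

lemma card_orbitF_pow {σ : Equiv.Perm I} {m : ℕ} {i k : I} (h : σ.SameCycle i k) :
    (orbitF (σ ^ m) k).card = (orbitF (σ ^ m) i).card := by
  obtain ⟨n, hn⟩ := h
  have hc : Commute (σ ^ n) (σ ^ m) :=
    ((Commute.refl σ).zpow_left n).pow_right m
  rw [← hn, orbitF_apply_comm hc, Finset.card_image_of_injective _ (Equiv.injective _)]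

lemma orbitF_disjoint {σ : Equiv.Perm I} {a b : I} (h : orbitF σ a ≠ orbitF σ b) :
    Disjoint (orbitF σ a) (orbitF σ b) := by
  rw [Finset.disjoint_left]
  intro x hxa hxb
  exact h (orbitF_eq_iff.2 ((mem_orbitF.1 hxa).trans (mem_orbitF.1 hxb).symm))

lemma biUnion_orbitBar (σ : Equiv.Perm I) (m : ℕ) (i : I) :
    (orbitBar σ (σ ^ m) i).biUnion id = orbitF σ i := by
  ext x
  simp only [Finset.mem_biUnion, orbitBar, Finset.mem_image, id_eq]
  constructor
  · rintro ⟨γ, ⟨k, hk, rfl⟩, hx⟩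
    exact mem_orbitF.2 ((mem_orbitF.1 hk).trans (sameCycle_of_pow (mem_orbitF.1 hx)))
  · intro hx
    exact ⟨orbitF (σ ^ m) x, ⟨x, hx, rfl⟩, mem_orbitF.2 (Equiv.Perm.SameCycle.refl _ x)⟩

lemma pairwiseDisjoint_orbitBar (σ : Equiv.Perm I) (m : ℕ) (i : I) :
    (↑(orbitBar σ (σ ^ m) i) : Set (Finset I)).PairwiseDisjoint id := by
  intro γ hγ γ' hγ' hne
  simp only [Finset.coe_image, orbitBar, Set.mem_image] at hγ hγ'
  obtain ⟨k, -, rfl⟩ := hγ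
  obtain ⟨k', -, rfl⟩ := hγ'
  exact orbitF_disjoint hne

lemma sum_orbitBar {M : Type*} [AddCommMonoid M] (σ : Equiv.Perm I) (m : ℕ) (i : I)
    (f : I → M) :
    ∑ γ ∈ orbitBar σ (σ ^ m) i, ∑ a ∈ γ, f a = ∑ a ∈ orbitF σ i, f a := by
  rw [← biUnion_orbitBar σ m i, Finset.sum_biUnion (pairwiseDisjoint_orbitBar σ m i)]
  simp

end Aux

/-- for a Cartan datum `(I,(·,·))` with an admissible diagram automorphism
`σ`, `m ≥ 1`, `τ = σ^m`, and `σ̄` the induced permutation of the set `I^τ` of `τ`-orbits: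
sending the `τ`-orbit of `i` to the `σ`-orbit of `i` induces a bijection between the
`σ̄`-orbits on `I^τ` and the `σ`-orbits on `I`, under which the Cartan datum induced
from `(X^τ,σ̄)` coincides with the one induced from `((I,(·,·)),σ)`:
`(α_{η̃},α_{η̃})_2 = (α_η,α_η)_1` and `(α_{η̃},α_{η̃'})_2 = (α_η,α_{η'})_1`. -/
theorem stmt2 {I : Type} [Fintype I] [DecidableEq I] [Nonempty I]
    (form : I → I → ℤ)
    (hsymm : ∀ i j, form i j = form j i)
    (hdiag_pos : ∀ i, 0 < form i i) (hdiag_even : ∀ i, 2 ∣ form i i)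
    (hoff : ∀ i j, i ≠ j → 2 * form i j ≤ 0 ∧ form i i ∣ 2 * form i j)
    (σ : Equiv.Perm I)
    (hform : ∀ i j, form (σ i) (σ j) = form i j)
    (hadm : ∀ i j, i ≠ j → σ.SameCycle i j → form i j = 0)
    (m : ℕ) (hm : 1 ≤ m) :
    -- the map (τ-orbit of i) ↦ (σ-orbit of i) induces a bijection between the set of
    -- σ̄-orbits on I^τ and the set of σ-orbits on I
    (∀ i j : I, orbitBar σ (σ ^ m) i = orbitBar σ (σ ^ m) j ↔ orbitF σ i = orbitF σ j) ∧
    -- diagonal values agree: (α_{η̃},α_{η̃})_2 = |η̃|·(α_γ,α_γ)_τ = |η|·(α_i,α_i) = (α_η,α_η)_1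
    (∀ i : I,
      ((orbitBar σ (σ ^ m) i).card : ℤ) * ((orbitF (σ ^ m) i).card * form i i) =
        (orbitF σ i).card * form i i) ∧
    -- off-diagonal values agree: (α_{η̃},α_{η̃'})_2 = Σ_{γ∈η̃,γ'∈η̃'} (α_γ,α_{γ'})_τ
    --                            = Σ_{a∈η,b∈η'} (α_a,α_b) = (α_η,α_{η'})_1
    (∀ i j : I, orbitF σ i ≠ orbitF σ j →
      (∑ γ ∈ orbitBar σ (σ ^ m) i, ∑ γ' ∈ orbitBar σ (σ ^ m) j,
        ∑ a ∈ γ, ∑ b ∈ γ', form a b) =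
      ∑ a ∈ orbitF σ i, ∑ b ∈ orbitF σ j, form a b) := by
  refine ⟨?_, ?_, ?_⟩
  · intro i j
    constructor
    · intro h
      have hi : orbitF (σ ^ m) i ∈ orbitBar σ (σ ^ m) j := by
        rw [← h]
        exact Finset.mem_image_of_mem _ (mem_orbitF.2 (Equiv.Perm.SameCycle.refl σ i))
      obtain ⟨k, hk, hki⟩ := Finset.mem_image.1 hi
      have h1 : (σ ^ m).SameCycle k i := orbitF_eq_iff.1 hki
      exact orbitF_eq_iff.2
        (((mem_orbitF.1 hk).trans (sameCycle_of_pow h1)).symm)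
    · intro h
      simp only [orbitBar, h]
  · intro i
    have key : ((orbitBar σ (σ ^ m) i).card : ℤ) * ((orbitF (σ ^ m) i).card : ℤ) =
        ((orbitF σ i).card : ℤ) := by
      have h1 : ∑ γ ∈ orbitBar σ (σ ^ m) i, ∑ _a ∈ γ, (1 : ℤ) =
          ∑ _a ∈ orbitF σ i, (1 : ℤ) := sum_orbitBar σ m i (fun _ => 1)
      have h2 : ∀ γ ∈ orbitBar σ (σ ^ m) i, ∑ _a ∈ γ, (1 : ℤ) =
          ((orbitF (σ ^ m) i).card : ℤ) := by
        intro γ hγ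
        obtain ⟨k, hk, rfl⟩ := Finset.mem_image.1 hγ
        rw [Finset.sum_const, card_orbitF_pow (mem_orbitF.1 hk)]
        simp
      rw [Finset.sum_congr rfl h2, Finset.sum_const, Finset.sum_const] at h1
      simpa [mul_comm] using h1
    calc ((orbitBar σ (σ ^ m) i).card : ℤ) * ((orbitF (σ ^ m) i).card * form i i)
        = ((orbitBar σ (σ ^ m) i).card : ℤ) * ((orbitF (σ ^ m) i).card : ℤ) * form i i := by
          ring
      _ = ((orbitF σ i).card : ℤ) * form i i := by rw [key]
  · intro i j _
    calc ∑ γ ∈ orbitBar σ (σ ^ m) i, ∑ γ' ∈ orbitBar σ (σ ^ m) j,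
          ∑ a ∈ γ, ∑ b ∈ γ', form a b
        = ∑ γ ∈ orbitBar σ (σ ^ m) i, ∑ a ∈ γ, ∑ γ' ∈ orbitBar σ (σ ^ m) j,
            ∑ b ∈ γ', form a b := Finset.sum_congr rfl fun γ _ => Finset.sum_comm
      _ = ∑ γ ∈ orbitBar σ (σ ^ m) i, ∑ a ∈ γ, ∑ b ∈ orbitF σ j, form a b :=
          Finset.sum_congr rfl fun γ _ => Finset.sum_congr rfl fun a _ =>
            sum_orbitBar σ m j (fun b => form a b)
      _ = ∑ a ∈ orbitF σ i, ∑ b ∈ orbitF σ j, form a b :=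
          sum_orbitBar σ m i _
end
end

section
/- Let (I,(·,·)) be a Cartan datum with an admissible diagram automorphism σ, and let ⟨σ⟩ be the cyclic group generated by σ. Then there exist k ≥ 0 and a chain of subgroups {1} = H_0 < H_1 < ⋯ < H_k = ⟨σ⟩ such that each index [H_{t+1} : H_t] is a prime power, and for each t the following holds: the set I/H_t of H_t-orbits carries a Cartan datum structure B_t obtained by iterating the induced-datum construction (with B_0 = (·,·)), there is an element g_t ∈ ⟨σ⟩ whose induced permutation σ_t of I/H_t is an admissible diagram automorphism of (I/H_t, B_t) of prime-power order, the σ_t-orbits on I/H_t are precisely the H_{t+1}-orbits on I, and the Cartan datum induced from ((I/H_t, B_t), σ_t) equals B_{t+1}; moreover B_k equals the Cartan datum induced from ((I,(·,·)), σ) on the set of σ-orbits. -/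
noncomputable section

open Finset

open Classical in
/-- The `H`-orbit of `i`, as a `Finset`, for a subgroup `H` of permutations. -/
def orbitH {I : Type} [Fintype I] [DecidableEq I] (H : Subgroup (Equiv.Perm I)) (i : I) :
    Finset I :=
  Finset.univ.filter (fun j => ∃ g ∈ H, g i = j)

namespace Stmt3Aux

variable {I : Type} [Fintype I] [DecidableEq I]

lemma mem_orbitH {H : Subgroup (Equiv.Perm I)} {i j : I} :
    j ∈ orbitH H i ↔ ∃ g ∈ H, g i = j := by
  classical
  simp [orbitH]

lemma self_mem_orbitH (H : Subgroup (Equiv.Perm I)) (i : I) : i ∈ orbitH H i :=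
  mem_orbitH.2 ⟨1, H.one_mem, rfl⟩

lemma orbitH_eq_of_mem {H : Subgroup (Equiv.Perm I)} {i j : I} (h : j ∈ orbitH H i) :
    orbitH H j = orbitH H i := by
  obtain ⟨g, hg, rfl⟩ := mem_orbitH.1 h
  ext b
  simp only [mem_orbitH]
  constructor
  · rintro ⟨h', hh', rfl⟩
    exact ⟨h' * g, H.mul_mem hh' hg, rfl⟩
  · rintro ⟨h', hh', rfl⟩
    refine ⟨h' * g⁻¹, H.mul_mem hh' (H.inv_mem hg), ?_⟩
    simp [Equiv.Perm.mul_apply]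

lemma orbitH_ne_of_mem {H : Subgroup (Equiv.Perm I)} {i j a b : I}
    (hne : orbitH H i ≠ orbitH H j) (ha : a ∈ orbitH H i) (hb : b ∈ orbitH H j) : a ≠ b := by
  rintro rfl
  exact hne ((orbitH_eq_of_mem ha).symm.trans (orbitH_eq_of_mem hb))

lemma orbitH_mono {H K : Subgroup (Equiv.Perm I)} (hHK : H ≤ K) (i : I) :
    orbitH H i ⊆ orbitH K i := by
  intro a ha
  obtain ⟨g, hg, rfl⟩ := mem_orbitH.1 ha
  exact mem_orbitH.2 ⟨g, hHK hg, rfl⟩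

variable {σ : Equiv.Perm I}

lemma commute_of_zpowers {H : Subgroup (Equiv.Perm I)} (hH : H ≤ Subgroup.zpowers σ)
    {g : Equiv.Perm I} (hg : g ∈ Subgroup.zpowers σ) {h : Equiv.Perm I} (hh : h ∈ H) :
    g * h = h * g := by
  obtain ⟨a, rfl⟩ := Subgroup.mem_zpowers_iff.1 hg
  obtain ⟨b, rfl⟩ := Subgroup.mem_zpowers_iff.1 (hH hh)
  exact (Commute.zpow_zpow (Commute.refl σ) a b)

lemma orbitH_image {H : Subgroup (Equiv.Perm I)} (hH : H ≤ Subgroup.zpowers σ)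
    {g : Equiv.Perm I} (hg : g ∈ Subgroup.zpowers σ) (i : I) :
    (orbitH H i).image g = orbitH H (g i) := by
  ext b
  simp only [mem_image, mem_orbitH]
  constructor
  · rintro ⟨a, ⟨h, hh, rfl⟩, rfl⟩
    refine ⟨h, hh, ?_⟩
    rw [← Equiv.Perm.mul_apply, ← commute_of_zpowers hH hg hh, Equiv.Perm.mul_apply]
  · rintro ⟨h, hh, rfl⟩
    refine ⟨h i, ⟨h, hh, rfl⟩, ?_⟩
    rw [← Equiv.Perm.mul_apply, commute_of_zpowers hH hg hh, Equiv.Perm.mul_apply]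

variable {form : I → I → ℤ}

lemma form_zpow (hform : ∀ i j, form (σ i) (σ j) = form i j) :
    ∀ (z : ℤ) (a b : I), form ((σ ^ z) a) ((σ ^ z) b) = form a b := by
  have hn : ∀ (n : ℕ) (a b : I), form ((σ ^ n) a) ((σ ^ n) b) = form a b := by
    intro n
    induction n with
    | zero => simp
    | succ n ih =>
      intro a b
      have : σ ^ (n + 1) = σ ^ n * σ := pow_succ σ n
      rw [this, Equiv.Perm.mul_apply, Equiv.Perm.mul_apply, ih, hform]
  intro z
  cases z with
  | ofNat n => exact_mod_cast hn n
  | negSucc n =>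
    intro a b
    have h2 := hn (n + 1) ((σ ^ (Int.negSucc n)) a) ((σ ^ (Int.negSucc n)) b)
    have h3 : ∀ x : I, (σ ^ ((n : ℕ) + 1)) ((σ ^ (Int.negSucc n)) x) = x := by
      intro x
      rw [← Equiv.Perm.mul_apply, ← zpow_natCast, ← zpow_add, Int.negSucc_eq]
      have h4 : (((n + 1 : ℕ) : ℤ) + -((n : ℤ) + 1)) = 0 := by push_cast; ring
      rw [h4, zpow_zero, Equiv.Perm.one_apply]
    rw [h3, h3] at h2
    exact h2.symm

lemma form_mem (hform : ∀ i j, form (σ i) (σ j) = form i j)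
    {g : Equiv.Perm I} (hg : g ∈ Subgroup.zpowers σ) (a b : I) :
    form (g a) (g b) = form a b := by
  obtain ⟨z, rfl⟩ := Subgroup.mem_zpowers_iff.1 hg
  exact form_zpow hform z a b

/-- The iterated induced form. -/
def Bform (form : I → I → ℤ) (γ γ' : Finset I) : ℤ :=
  if γ = γ' then ∑ a ∈ γ, form a a else ∑ a ∈ γ, ∑ b ∈ γ', form a b

lemma Bform_diag (hform : ∀ i j, form (σ i) (σ j) = form i j)
    {H : Subgroup (Equiv.Perm I)} (hH : H ≤ Subgroup.zpowers σ) (i : I) :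
    Bform form (orbitH H i) (orbitH H i) = ((orbitH H i).card : ℤ) * form i i := by
  rw [Bform, if_pos rfl]
  rw [Finset.sum_congr rfl (fun a ha => ?_), Finset.sum_const, nsmul_eq_mul]
  obtain ⟨g, hg, rfl⟩ := mem_orbitH.1 ha
  exact form_mem hform (hH hg) i i

lemma sum_orbitH_invariant (hform : ∀ i j, form (σ i) (σ j) = form i j)
    {H : Subgroup (Equiv.Perm I)} (hH : H ≤ Subgroup.zpowers σ)
    {g : Equiv.Perm I} (hg : g ∈ Subgroup.zpowers σ) (i : I) :
    ∑ a ∈ orbitH H (g i), form a a = ∑ a ∈ orbitH H i, form a a := by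
  rw [← orbitH_image hH hg i, Finset.sum_image (fun a _ b _ h => g.injective h)]
  exact Finset.sum_congr rfl fun a _ => form_mem hform hg a a

/-- Decomposing a `K`-orbit sum into `H`-orbit sums, for `H ≤ K`. -/
lemma sum_orbit_partition {H K : Subgroup (Equiv.Perm I)} (hHK : H ≤ K) (i : I) (f : I → ℤ) :
    ∑ a ∈ orbitH K i, f a = ∑ γ ∈ (orbitH K i).image (orbitH H), ∑ a ∈ γ, f a := by
  have hdisj : Set.PairwiseDisjoint ((orbitH K i).image (orbitH H) : Set (Finset I)) id := by
    intro γ hγ γ' hγ' hne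
    simp only [Finset.coe_image, Set.mem_image, Finset.mem_coe] at hγ hγ'
    obtain ⟨a, _, rfl⟩ := hγ
    obtain ⟨b, _, rfl⟩ := hγ'
    refine Finset.disjoint_left.2 fun x hx hx' => hne ?_
    rw [← orbitH_eq_of_mem hx, ← orbitH_eq_of_mem hx']
  have hcover : ((orbitH K i).image (orbitH H)).biUnion id = orbitH K i := by
    ext b
    simp only [Finset.mem_biUnion, Finset.mem_image, id]
    constructor
    · rintro ⟨γ, ⟨a, ha, rfl⟩, hb⟩
      obtain ⟨h, hh, rfl⟩ := mem_orbitH.1 hb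
      obtain ⟨h', hh', rfl⟩ := mem_orbitH.1 ha
      exact mem_orbitH.2 ⟨h * h', K.mul_mem (hHK hh) hh', rfl⟩
    · intro hb
      exact ⟨orbitH H b, ⟨b, hb, rfl⟩, self_mem_orbitH H b⟩
  conv_lhs => rw [← hcover]
  rw [Finset.sum_biUnion hdisj]
  simp only [id]

end Stmt3Aux

namespace Stmt3Aux2
open Stmt3Aux

variable {I : Type} [Fintype I] [DecidableEq I] {σ : Equiv.Perm I} {form : I → I → ℤ}

lemma Bform_symm (hsymm : ∀ i j, form i j = form j i) {H : Subgroup (Equiv.Perm I)} (i j : I) :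
    Bform form (orbitH H i) (orbitH H j) = Bform form (orbitH H j) (orbitH H i) := by
  unfold Bform
  by_cases h : orbitH H i = orbitH H j
  · rw [if_pos h, if_pos h.symm, h]
  · rw [if_neg h, if_neg (Ne.symm h), Finset.sum_comm]
    exact Finset.sum_congr rfl fun b _ => Finset.sum_congr rfl fun a _ => hsymm a b

lemma Bform_diag_pos (hdiag_pos : ∀ i, 0 < form i i) {H : Subgroup (Equiv.Perm I)} (i : I) :
    0 < Bform form (orbitH H i) (orbitH H i) := by
  rw [Bform, if_pos rfl]
  exact Finset.sum_pos (fun a _ => hdiag_pos a) ⟨i, self_mem_orbitH H i⟩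

lemma Bform_diag_even (hdiag_even : ∀ i, 2 ∣ form i i) {H : Subgroup (Equiv.Perm I)} (i : I) :
    2 ∣ Bform form (orbitH H i) (orbitH H i) := by
  rw [Bform, if_pos rfl]
  exact Finset.dvd_sum fun a _ => hdiag_even a

lemma Bform_off
    (hoff : ∀ i j, i ≠ j → 2 * form i j ≤ 0 ∧ form i i ∣ 2 * form i j)
    (hform : ∀ i j, form (σ i) (σ j) = form i j)
    {H : Subgroup (Equiv.Perm I)} (hH : H ≤ Subgroup.zpowers σ) (i j : I)
    (hne : orbitH H i ≠ orbitH H j) :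
    2 * Bform form (orbitH H i) (orbitH H j) ≤ 0 ∧
      Bform form (orbitH H i) (orbitH H i) ∣ 2 * Bform form (orbitH H i) (orbitH H j) := by
  have key : ∀ a ∈ orbitH H i, ∑ b ∈ orbitH H j, form a b = ∑ b ∈ orbitH H j, form i b := by
    intro a ha
    obtain ⟨g, hg, rfl⟩ := mem_orbitH.1 ha
    have himg : (orbitH H j).image g = orbitH H j := by
      rw [orbitH_image hH (hH hg) j]
      exact orbitH_eq_of_mem (mem_orbitH.2 ⟨g, hg, rfl⟩)
    calc ∑ b ∈ orbitH H j, form (g i) b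
        = ∑ b ∈ (orbitH H j).image g, form (g i) b := by rw [himg]
      _ = ∑ b ∈ orbitH H j, form (g i) (g b) :=
          Finset.sum_image (fun a _ b _ h => g.injective h)
      _ = ∑ b ∈ orbitH H j, form i b :=
          Finset.sum_congr rfl fun b _ => form_mem hform (hH hg) i b
  have hBoff : Bform form (orbitH H i) (orbitH H j)
      = ∑ a ∈ orbitH H i, ∑ b ∈ orbitH H j, form a b := by rw [Bform, if_neg hne]
  constructor
  · rw [hBoff, Finset.mul_sum]
    refine Finset.sum_nonpos fun a ha => ?_
    rw [Finset.mul_sum]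
    refine Finset.sum_nonpos fun b hb => ?_
    exact (hoff a b (orbitH_ne_of_mem hne ha hb)).1
  · have h2 : 2 * Bform form (orbitH H i) (orbitH H j)
        = ((orbitH H i).card : ℤ) * ∑ b ∈ orbitH H j, 2 * form i b := by
      rw [hBoff, Finset.mul_sum,
        Finset.sum_congr rfl (fun a ha => by rw [key a ha]),
        Finset.sum_const, nsmul_eq_mul, Finset.mul_sum]
    rw [h2, Bform_diag hform hH i]
    refine mul_dvd_mul_left _ (Finset.dvd_sum fun b hb => ?_)
    exact (hoff i b (orbitH_ne_of_mem hne (self_mem_orbitH H i) hb)).2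

lemma Bform_adm (hadm : ∀ i j, i ≠ j → σ.SameCycle i j → form i j = 0)
    {H : Subgroup (Equiv.Perm I)} (hH : H ≤ Subgroup.zpowers σ)
    {g : Equiv.Perm I} (hg : g ∈ Subgroup.zpowers σ) {i j : I}
    (hne : orbitH H i ≠ orbitH H j)
    (hlink : ∃ z : ℤ, orbitH H ((g ^ z) i) = orbitH H j) :
    Bform form (orbitH H i) (orbitH H j) = 0 := by
  obtain ⟨z, hz⟩ := hlink
  rw [Bform, if_neg hne]
  refine Finset.sum_eq_zero fun a ha => Finset.sum_eq_zero fun b hb => ?_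
  obtain ⟨h1, hh1, ha'⟩ := mem_orbitH.1 ha
  have hb2 : b ∈ orbitH H ((g ^ z) i) := hz ▸ hb
  obtain ⟨h2, hh2, hb'⟩ := mem_orbitH.1 hb2
  have hmem : h2 * g ^ z * h1⁻¹ ∈ Subgroup.zpowers σ :=
    mul_mem (mul_mem (hH hh2) (Subgroup.zpow_mem _ hg z)) (inv_mem (hH hh1))
  obtain ⟨w, hw⟩ := Subgroup.mem_zpowers_iff.1 hmem
  have hcyc : (σ ^ w) a = b := by
    rw [hw, ← ha', ← hb']
    simp [Equiv.Perm.mul_apply]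
  exact hadm _ _ (orbitH_ne_of_mem hne ha hb) ⟨w, hcyc⟩

lemma ne_of_image_orbits {H K : Subgroup (Equiv.Perm I)} (hHK : H ≤ K) {i j : I}
    (hne : orbitH K i ≠ orbitH K j) {γ γ' : Finset I}
    (hγ : γ ∈ (orbitH K i).image (orbitH H)) (hγ' : γ' ∈ (orbitH K j).image (orbitH H)) :
    γ ≠ γ' := by
  obtain ⟨a, ha, rfl⟩ := Finset.mem_image.1 hγ
  obtain ⟨b, hb, rfl⟩ := Finset.mem_image.1 hγ'
  intro h
  have h1 : a ∈ orbitH H b := h ▸ self_mem_orbitH H a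
  have h2 : a ∈ orbitH K b := orbitH_mono hHK b h1
  refine hne ?_
  rw [← orbitH_eq_of_mem ha, orbitH_eq_of_mem h2, orbitH_eq_of_mem hb]

lemma Bform_step_diag (hform : ∀ i j, form (σ i) (σ j) = form i j)
    {H K : Subgroup (Equiv.Perm I)} (hH : H ≤ Subgroup.zpowers σ)
    (hK : K ≤ Subgroup.zpowers σ) (hHK : H ≤ K) (i : I) :
    Bform form (orbitH K i) (orbitH K i)
      = (((orbitH K i).image (orbitH H)).card : ℤ)
          * Bform form (orbitH H i) (orbitH H i) := by
  rw [Bform, if_pos rfl, sum_orbit_partition hHK]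
  have hc : ∀ γ ∈ (orbitH K i).image (orbitH H),
      ∑ a ∈ γ, form a a = ∑ a ∈ orbitH H i, form a a := by
    intro γ hγ
    obtain ⟨a, ha, rfl⟩ := Finset.mem_image.1 hγ
    obtain ⟨g, hg, rfl⟩ := mem_orbitH.1 ha
    exact sum_orbitH_invariant hform hH (hK hg) i
  rw [Finset.sum_congr rfl hc, Finset.sum_const, nsmul_eq_mul, Bform, if_pos rfl]

lemma Bform_step_off {H K : Subgroup (Equiv.Perm I)} (hHK : H ≤ K) (i j : I)
    (hne : orbitH K i ≠ orbitH K j) :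
    Bform form (orbitH K i) (orbitH K j)
      = ∑ γ ∈ (orbitH K i).image (orbitH H),
          ∑ γ' ∈ (orbitH K j).image (orbitH H), Bform form γ γ' := by
  rw [Bform, if_neg hne, sum_orbit_partition hHK i (fun a => ∑ b ∈ orbitH K j, form a b)]
  refine Finset.sum_congr rfl fun γ hγ => ?_
  rw [Finset.sum_congr rfl (fun a ha => sum_orbit_partition hHK j (fun b => form a b)),
    Finset.sum_comm]
  refine Finset.sum_congr rfl fun γ' hγ' => ?_
  rw [Bform, if_neg (ne_of_image_orbits hHK hne hγ hγ')]

lemma Bform_g_invariant (hform : ∀ i j, form (σ i) (σ j) = form i j)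
    {H : Subgroup (Equiv.Perm I)} (hH : H ≤ Subgroup.zpowers σ)
    {g : Equiv.Perm I} (hg : g ∈ Subgroup.zpowers σ) (i j : I) :
    Bform form (orbitH H (g i)) (orbitH H (g j)) = Bform form (orbitH H i) (orbitH H j) := by
  rw [← orbitH_image hH hg i, ← orbitH_image hH hg j]
  unfold Bform
  by_cases h : orbitH H i = orbitH H j
  · rw [if_pos (by rw [h]), if_pos h,
      Finset.sum_image (fun a _ b _ hab => g.injective hab)]
    exact Finset.sum_congr rfl fun a _ => form_mem hform hg a a
  · rw [if_neg (fun hc => h (Finset.image_injective g.injective hc)), if_neg h,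
      Finset.sum_image (fun a _ b _ hab => g.injective hab)]
    refine Finset.sum_congr rfl fun a _ => ?_
    rw [Finset.sum_image (fun a _ b _ hab => g.injective hab)]
    exact Finset.sum_congr rfl fun b _ => form_mem hform hg a b

lemma orbitF_eq (σ : Equiv.Perm I) (i : I) :
    orbitF σ i = orbitH (Subgroup.zpowers σ) i := by
  ext j
  simp only [orbitF, Finset.mem_filter, Finset.mem_univ, true_and, mem_orbitH]
  constructor
  · rintro ⟨z, hz⟩
    exact ⟨σ ^ z, Subgroup.zpow_mem _ (Subgroup.mem_zpowers σ) z, hz⟩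
  · rintro ⟨g, hg, rfl⟩
    obtain ⟨z, rfl⟩ := Subgroup.mem_zpowers_iff.1 hg
    exact ⟨z, rfl⟩

end Stmt3Aux2

namespace Stmt3Aux3
open Stmt3Aux

lemma no_small_period {I : Type} [Fintype I] [DecidableEq I] (σ : Equiv.Perm I)
    {m p c' : ℕ} (hp : p.Prime) (hm : m ∣ orderOf σ) (hmp : p ∣ m) (hm0 : m ≠ 0)
    (hc0 : 0 < c') (hcp : c' < p)
    (hfix : ∀ i : I, ∃ z : ℤ, ((σ ^ m) ^ z) (((σ ^ (m / p)) ^ c') i) = i) : False := by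
  set n := orderOf σ with hn
  have npos : 0 < n := orderOf_pos σ
  set a := m.factorization p with ha_def
  have ha : 0 < a := hp.factorization_pos_of_dvd hm0 hmp
  -- minimal periods
  have hper_n : ∀ i : I, Function.IsPeriodicPt σ n i := by
    intro i
    have : σ ^ n = 1 := pow_orderOf_eq_one σ
    show (⇑σ)^[n] i = i
    rw [← Equiv.Perm.coe_pow, this, Equiv.Perm.coe_one, id]
  have hL_dvd_n : ∀ i : I, Function.minimalPeriod σ i ∣ n :=
    fun i => (hper_n i).minimalPeriod_dvd
  have hL_pos : ∀ i : I, 0 < Function.minimalPeriod σ i := fun i =>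
    Function.minimalPeriod_pos_of_mem_periodicPts
      (Function.mk_mem_periodicPts npos (hper_n i))
  -- step 1 : no minimal period is divisible by p^a
  have step1 : ∀ i : I, ¬ (p ^ a ∣ Function.minimalPeriod σ i) := by
    intro i hdvd
    obtain ⟨z, hz⟩ := hfix i
    set x : ℤ := (m : ℤ) * z + ((m / p) * c' : ℕ) with hx_def
    have hσx : (σ ^ x) i = i := by
      have e1 : ((σ ^ m : Equiv.Perm I) ^ z) = σ ^ ((m : ℤ) * z) := by
        rw [← zpow_natCast σ m, ← zpow_mul]
      have e2 : ((σ ^ (m / p) : Equiv.Perm I) ^ c') = σ ^ (((m / p) * c' : ℕ) : ℤ) := by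
        rw [← pow_mul, zpow_natCast]
      rw [hx_def, zpow_add, Equiv.Perm.mul_apply, ← e1, ← e2]
      exact hz
    -- minimal period divides x
    have hLx : ((Function.minimalPeriod σ i : ℕ) : ℤ) ∣ x := by
      have hr_eq : σ ^ (x % (n : ℤ)) = σ ^ x := zpow_mod_orderOf σ x
      have hr_nonneg : 0 ≤ x % (n : ℤ) := Int.emod_nonneg x (by exact_mod_cast npos.ne')
      have hσr : (σ ^ ((x % (n : ℤ)).toNat)) i = i := by
        have : σ ^ ((x % (n : ℤ)).toNat) = σ ^ (x % (n : ℤ)) := by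
          rw [← zpow_natCast, Int.toNat_of_nonneg hr_nonneg]
        rw [this, hr_eq]
        exact hσx
      have hper : Function.IsPeriodicPt σ ((x % (n : ℤ)).toNat) i := by
        show (⇑σ)^[(x % (n : ℤ)).toNat] i = i
        rw [← Equiv.Perm.coe_pow]
        exact hσr
      have h1 : (Function.minimalPeriod σ i : ℤ) ∣ (x % (n : ℤ)) := by
        have := hper.minimalPeriod_dvd
        have h2 : ((Function.minimalPeriod σ i : ℕ) : ℤ) ∣ (((x % (n : ℤ)).toNat : ℕ) : ℤ) :=
          Int.natCast_dvd_natCast.2 this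
        rwa [Int.toNat_of_nonneg hr_nonneg] at h2
      have h3 : (Function.minimalPeriod σ i : ℤ) ∣ (n : ℤ) :=
        Int.natCast_dvd_natCast.2 (hL_dvd_n i)
      have h4 : x = (n : ℤ) * (x / (n : ℤ)) + x % (n : ℤ) := (Int.mul_ediv_add_emod x n).symm
      rw [h4]
      exact dvd_add (Dvd.dvd.mul_right h3 _) h1
    have hpa_x : ((p ^ a : ℕ) : ℤ) ∣ x :=
      dvd_trans (Int.natCast_dvd_natCast.2 hdvd) hLx
    have hpa_m : p ^ a ∣ m := Nat.ordProj_dvd m p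
    have hpa_mz : ((p ^ a : ℕ) : ℤ) ∣ (m : ℤ) * z :=
      Dvd.dvd.mul_right (Int.natCast_dvd_natCast.2 hpa_m) z
    have hpa_rest : ((p ^ a : ℕ) : ℤ) ∣ (((m / p) * c' : ℕ) : ℤ) := by
      have : x - (m : ℤ) * z = (((m / p) * c' : ℕ) : ℤ) := by rw [hx_def]; ring
      rw [← this]
      exact dvd_sub hpa_x hpa_mz
    have hpa_nat : p ^ a ∣ (m / p) * c' := Int.natCast_dvd_natCast.1 hpa_rest
    have hcop : Nat.Coprime (p ^ a) c' := by
      refine Nat.Coprime.pow_left a ?_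
      rw [hp.coprime_iff_not_dvd]
      intro hdvd'
      exact absurd (Nat.le_of_dvd hc0 hdvd') (not_le.2 hcp)
    have hpa_mp : p ^ a ∣ m / p := (Nat.Coprime.dvd_of_dvd_mul_right hcop) hpa_nat
    have hpow_succ : p ^ (a + 1) ∣ m := by
      have h5 : p ^ a * p ∣ (m / p) * p := mul_dvd_mul_right hpa_mp p
      rwa [← pow_succ, Nat.div_mul_cancel hmp] at h5
    exact Nat.pow_succ_factorization_not_dvd hm0 hp hpow_succ
  -- step 2 : build a global period smaller than n
  set w : ℕ := p ^ (a - 1) * (n / p ^ (n.factorization p)) with hw_def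
  have hLw : ∀ i : I, Function.minimalPeriod σ i ∣ w := by
    intro i
    set L := Function.minimalPeriod σ i with hL_def
    have hL0 : L ≠ 0 := (hL_pos i).ne'
    have hfa : L.factorization p ≤ a - 1 := by
      have : ¬ a ≤ L.factorization p := by
        intro hle
        exact step1 i ((hp.pow_dvd_iff_le_factorization hL0).2 hle)
      omega
    have d1 : p ^ (L.factorization p) ∣ w :=
      dvd_mul_of_dvd_left (pow_dvd_pow p hfa) _
    have d2 : (L / p ^ (L.factorization p)) ∣ w :=
      dvd_mul_of_dvd_right (Nat.ordCompl_dvd_ordCompl_of_dvd (hL_dvd_n i) p) _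
    have hcop : Nat.Coprime (p ^ (L.factorization p)) (L / p ^ (L.factorization p)) :=
      Nat.Coprime.pow_left _ (Nat.coprime_ordCompl hp hL0)
    have := Nat.Coprime.mul_dvd_of_dvd_of_dvd hcop d1 d2
    rwa [Nat.ordProj_mul_ordCompl_eq_self] at this
  have hσw : σ ^ w = 1 := by
    ext i
    have hper : Function.IsPeriodicPt σ w i :=
      Function.isPeriodicPt_iff_minimalPeriod_dvd.2 (hLw i)
    have : (⇑σ)^[w] i = i := hper
    rw [← Equiv.Perm.coe_pow] at this
    simpa using this
  have hnw : n ∣ w := orderOf_dvd_of_pow_eq_one hσw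
  have hpa_n : p ^ a ∣ n := dvd_trans (Nat.ordProj_dvd m p) hm
  have hpa_w : p ^ a ∣ w := dvd_trans hpa_n hnw
  have hsplit : p ^ (a - 1) * p ∣ p ^ (a - 1) * (n / p ^ (n.factorization p)) := by
    have : p ^ (a - 1) * p = p ^ a := by
      rw [← pow_succ]
      congr 1
      omega
    rw [this]
    exact hpa_w
  have hfinal : p ∣ n / p ^ (n.factorization p) :=
    (Nat.mul_dvd_mul_iff_left (pow_pos hp.pos (a-1) : 0 < p ^ (a-1))).1 hsplit
  exact Nat.not_dvd_ordCompl hp npos.ne' hfinal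

end Stmt3Aux3

namespace Stmt3Aux4
open Stmt3Aux

variable {I : Type} [Fintype I] [DecidableEq I]

lemma orbitH_bot (i : I) : orbitH (⊥ : Subgroup (Equiv.Perm I)) i = {i} := by
  ext j
  simp only [mem_orbitH, Subgroup.mem_bot, Finset.mem_singleton]
  constructor
  · rintro ⟨g, rfl, rfl⟩; rfl
  · rintro rfl; exact ⟨1, rfl, rfl⟩

lemma Bform_singleton (form : I → I → ℤ) (i j : I) :
    Bform form ({i} : Finset I) ({j} : Finset I) = form i j := by
  by_cases h : i = j
  · subst h; rw [Bform, if_pos rfl, Finset.sum_singleton]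
  · rw [Bform, if_neg (by simpa using h), Finset.sum_singleton, Finset.sum_singleton]

end Stmt3Aux4



open Stmt3Aux Stmt3Aux2 Stmt3Aux3 Stmt3Aux4

/-- for a Cartan datum `(I,(·,·))` with an admissible diagram automorphism
`σ`, there is a chain `{1} = H_0 < H_1 < ⋯ < H_k = ⟨σ⟩` of subgroups with prime-power
indices, Cartan data `B_t` on the orbit sets `I/H_t` obtained by iterating the
induced-datum construction, and elements `g_t ∈ ⟨σ⟩` inducing admissible diagram
automorphisms `σ_t` of `(I/H_t, B_t)` of prime-power order whose orbits are the
`H_{t+1}`-orbits, with `B_{t+1}` the datum induced from `((I/H_t,B_t),σ_t)`; and `B_k`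
is the Cartan datum induced from `((I,(·,·)),σ)` on the set of `σ`-orbits. -/
theorem stmt3 {I : Type} [Fintype I] [DecidableEq I] [Nonempty I]
    (form : I → I → ℤ)
    (hsymm : ∀ i j, form i j = form j i)
    (hdiag_pos : ∀ i, 0 < form i i) (hdiag_even : ∀ i, 2 ∣ form i i)
    (hoff : ∀ i j, i ≠ j → 2 * form i j ≤ 0 ∧ form i i ∣ 2 * form i j)
    (σ : Equiv.Perm I)
    (hform : ∀ i j, form (σ i) (σ j) = form i j)
    (hadm : ∀ i j, i ≠ j → σ.SameCycle i j → form i j = 0) :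
    ∃ (k : ℕ) (H : ℕ → Subgroup (Equiv.Perm I))
      (B : ℕ → Finset I → Finset I → ℤ) (g : ℕ → Equiv.Perm I),
      -- the chain of subgroups
      H 0 = ⊥ ∧ H k = Subgroup.zpowers σ ∧
      (∀ t, t < k → H t < H (t + 1)) ∧
      -- each index [H_{t+1} : H_t] is a prime power
      (∀ t, t < k → IsPrimePow ((H t).relIndex (H (t + 1)))) ∧
      -- B_0 is the original form (H_0-orbits are singletons)
      (∀ i j : I, B 0 (orbitH (H 0) i) (orbitH (H 0) j) = form i j) ∧
      -- each B_t is a Cartan datum on the set I/H_t of H_t-orbits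
      (∀ t, t ≤ k →
        (∀ i j : I, B t (orbitH (H t) i) (orbitH (H t) j)
            = B t (orbitH (H t) j) (orbitH (H t) i)) ∧
        (∀ i : I, 0 < B t (orbitH (H t) i) (orbitH (H t) i) ∧
            2 ∣ B t (orbitH (H t) i) (orbitH (H t) i)) ∧
        (∀ i j : I, orbitH (H t) i ≠ orbitH (H t) j →
            2 * B t (orbitH (H t) i) (orbitH (H t) j) ≤ 0 ∧
            B t (orbitH (H t) i) (orbitH (H t) i) ∣
              2 * B t (orbitH (H t) i) (orbitH (H t) j))) ∧
      -- g_t ∈ ⟨σ⟩, and g_t maps H_t-orbits to H_t-orbits, inducing a permutation σ_t of I/H_t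
      (∀ t, t < k → g t ∈ Subgroup.zpowers σ) ∧
      (∀ t, t < k → ∀ i : I, (orbitH (H t) i).image (g t) = orbitH (H t) ((g t) i)) ∧
      -- σ_t is a diagram automorphism of (I/H_t, B_t) ...
      (∀ t, t < k → ∀ i j : I,
        B t (orbitH (H t) ((g t) i)) (orbitH (H t) ((g t) j))
          = B t (orbitH (H t) i) (orbitH (H t) j)) ∧
      -- ... which is admissible ...
      (∀ t, t < k → ∀ i j : I, orbitH (H t) i ≠ orbitH (H t) j →
        (∃ nz : ℤ, orbitH (H t) (((g t) ^ nz) i) = orbitH (H t) j) →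
        B t (orbitH (H t) i) (orbitH (H t) j) = 0) ∧
      -- ... and has prime-power order as a permutation of I/H_t
      (∀ t, t < k → ∃ c : ℕ, IsPrimePow c ∧
        (∀ i : I, orbitH (H t) (((g t) ^ c) i) = orbitH (H t) i) ∧
        (∀ c' : ℕ, 0 < c' → (∀ i : I, orbitH (H t) (((g t) ^ c') i) = orbitH (H t) i) →
          c ≤ c')) ∧
      -- the σ_t-orbits on I/H_t are precisely the H_{t+1}-orbits on I
      (∀ t, t < k → ∀ i j : I,
        (∃ nz : ℤ, orbitH (H t) (((g t) ^ nz) i) = orbitH (H t) j) ↔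
          orbitH (H (t + 1)) i = orbitH (H (t + 1)) j) ∧
      -- B_{t+1} is the Cartan datum induced from ((I/H_t, B_t), σ_t)
      (∀ t, t < k →
        (∀ i : I, B (t + 1) (orbitH (H (t + 1)) i) (orbitH (H (t + 1)) i)
            = ((orbitH (H (t + 1)) i).image (orbitH (H t))).card *
                B t (orbitH (H t) i) (orbitH (H t) i)) ∧
        (∀ i j : I, orbitH (H (t + 1)) i ≠ orbitH (H (t + 1)) j →
          B (t + 1) (orbitH (H (t + 1)) i) (orbitH (H (t + 1)) j)
            = ∑ γ ∈ (orbitH (H (t + 1)) i).image (orbitH (H t)),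
                ∑ γ' ∈ (orbitH (H (t + 1)) j).image (orbitH (H t)), B t γ γ')) ∧
      -- B_k is the Cartan datum induced from ((I,(·,·)), σ) on the σ-orbits
      (∀ i : I, B k (orbitH (H k) i) (orbitH (H k) i)
          = (orbitF σ i).card * form i i) ∧
      (∀ i j : I, orbitH (H k) i ≠ orbitH (H k) j →
        B k (orbitH (H k) i) (orbitH (H k) j)
          = ∑ a ∈ orbitF σ i, ∑ b ∈ orbitF σ j, form a b) := by
  classical
  set n := orderOf σ with hn_def
  have npos : 0 < n := orderOf_pos σ
  set ps := n.primeFactorsList with hps_def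
  set k := ps.length with hk_def
  set d : ℕ → ℕ := fun t => (ps.take t).prod with hd_def
  have hd0 : d 0 = 1 := by simp [hd_def]
  have hps_prod : ps.prod = n := Nat.prod_primeFactorsList npos.ne'
  have hdk : d k = n := by
    rw [hd_def]
    simp only [hk_def, List.take_length]
    exact hps_prod
  have hd_dvd : ∀ t, d t ∣ n := by
    intro t
    have h1 : (ps.take t).prod ∣ ps.prod := by
      conv_rhs => rw [← List.take_append_drop t ps]
      rw [List.prod_append]
      exact dvd_mul_right _ _
    rwa [hps_prod] at h1
  have hd_pos : ∀ t, 0 < d t := fun t => Nat.pos_of_dvd_of_pos (hd_dvd t) npos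
  set m : ℕ → ℕ := fun t => n / d t with hm_def
  have hm_dvd : ∀ t, m t ∣ n := fun t => Nat.div_dvd_of_dvd (hd_dvd t)
  have hprime : ∀ t (ht : t < k), (ps.get ⟨t, ht⟩).Prime := fun t ht =>
    Nat.prime_of_mem_primeFactorsList (ps.get_mem _)
  have hd_succ : ∀ t (ht : t < k), d (t + 1) = d t * ps.get ⟨t, ht⟩ := fun t ht =>
    List.prod_take_succ ps t ht
  have hm_succ : ∀ t (ht : t < k), m t = ps.get ⟨t, ht⟩ * m (t + 1) := by
    intro t ht
    have h1 : d t * ps.get ⟨t, ht⟩ ∣ n := by rw [← hd_succ t ht]; exact hd_dvd (t + 1)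
    have h2 : ps.get ⟨t, ht⟩ ∣ n / d t := (Nat.dvd_div_iff_mul_dvd (hd_dvd t)).2 h1
    have h3 : m (t + 1) = m t / ps.get ⟨t, ht⟩ := by
      show n / d (t + 1) = n / d t / ps.get ⟨t, ht⟩
      rw [hd_succ t ht, Nat.div_div_eq_div_mul]
    rw [h3]
    exact (Nat.mul_div_cancel' h2).symm
  have horder : ∀ t, orderOf (σ ^ m t) = d t := by
    intro t
    rw [orderOf_pow, ← hn_def, Nat.gcd_eq_right (hm_dvd t)]
    exact Nat.div_div_self (hd_dvd t) npos.ne'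
  set H : ℕ → Subgroup (Equiv.Perm I) := fun t => Subgroup.zpowers (σ ^ m t) with hH_def
  set g : ℕ → Equiv.Perm I := fun t => σ ^ m (t + 1) with hg_def
  have hH_le : ∀ t, H t ≤ Subgroup.zpowers σ := fun t =>
    Subgroup.zpowers_le.2 (Subgroup.npow_mem_zpowers σ (m t))
  have hg_mem : ∀ t, g t ∈ Subgroup.zpowers σ := fun t => Subgroup.npow_mem_zpowers σ _
  have hgp : ∀ t (ht : t < k), (g t) ^ (ps.get ⟨t, ht⟩) = σ ^ m t := by
    intro t ht
    show (σ ^ m (t + 1)) ^ (ps.get ⟨t, ht⟩) = σ ^ m t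
    rw [← pow_mul, hm_succ t ht, mul_comm]
  have hH_mono : ∀ t (ht : t < k), H t ≤ H (t + 1) := by
    intro t ht
    refine Subgroup.zpowers_le.2 ?_
    rw [← hgp t ht]
    exact pow_mem (Subgroup.mem_zpowers _) _
  have hcard : ∀ t, Nat.card (H t) = d t := fun t => by
    rw [hH_def]
    rw [Nat.card_zpowers, horder t]
  have hH0 : H 0 = ⊥ := by
    have hm0 : m 0 = n := by rw [hm_def]; simp [hd0]
    rw [hH_def]
    show Subgroup.zpowers (σ ^ m 0) = ⊥
    rw [hm0, hn_def, pow_orderOf_eq_one, Subgroup.zpowers_one_eq_bot]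
  have hHk : H k = Subgroup.zpowers σ := by
    have hmk : m k = 1 := by rw [hm_def]; show n / d k = 1; rw [hdk, Nat.div_self npos]
    rw [hH_def]
    show Subgroup.zpowers (σ ^ m k) = _
    rw [hmk, pow_one]
  refine ⟨k, H, fun _ => Bform form, g, hH0, hHk, ?_, ?_, ?_, ?_, ?_, ?_, ?_, ?_, ?_, ?_, ?_, ?_, ?_⟩
  · -- strict chain
    intro t ht
    refine lt_of_le_of_ne (hH_mono t ht) fun heq => ?_
    have h1 : d t = d (t + 1) := by rw [← hcard t, ← hcard (t + 1), heq]
    have h2 := hd_succ t ht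
    have h3 := (hprime t ht).two_le
    have h4 := hd_pos t
    nlinarith
  · -- relindex prime
    intro t ht
    set p := ps.get ⟨t, ht⟩ with hp_def
    have e1 := Subgroup.relIndex_mul_index (hH_mono t ht)
    have e2 := Subgroup.card_mul_index (H t)
    have e3 := Subgroup.card_mul_index (H (t + 1))
    rw [hcard t] at e2
    rw [hcard (t + 1), hd_succ t ht] at e3
    have hq0 : (H (t + 1)).index ≠ 0 := by
      intro h0
      rw [h0, mul_zero] at e3
      have : 0 < Nat.card (Equiv.Perm I) := Nat.card_pos
      omega
    have hrel : (H t).relIndex (H (t + 1)) = p := by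
      have e4 : d t * ((H t).relIndex (H (t + 1)) * (H (t + 1)).index)
          = d t * p * (H (t + 1)).index := by rw [e1, e2, ← e3]
      have h4 := hd_pos t
      have h5 : (H t).relIndex (H (t + 1)) * (H (t + 1)).index = p * (H (t + 1)).index := by
        rw [mul_assoc] at e4
        exact Nat.eq_of_mul_eq_mul_left h4 e4
      exact Nat.eq_of_mul_eq_mul_right (Nat.pos_of_ne_zero hq0) h5
    rw [hrel]
    exact (hprime t ht).isPrimePow
  · -- B 0 is form
    intro i j
    rw [hH0, orbitH_bot, orbitH_bot]
    exact Bform_singleton form i j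
  · -- Cartan datum at each level
    intro t _
    exact ⟨fun i j => Bform_symm hsymm i j,
      fun i => ⟨Bform_diag_pos hdiag_pos i, Bform_diag_even hdiag_even i⟩,
      fun i j hne => Bform_off hoff hform (hH_le t) i j hne⟩
  · -- g t ∈ zpowers σ
    intro t _
    exact hg_mem t
  · -- image of orbits
    intro t _ i
    exact orbitH_image (hH_le t) (hg_mem t) i
  · -- diagram automorphism
    intro t _ i j
    exact Bform_g_invariant hform (hH_le t) (hg_mem t) i j
  · -- admissible
    intro t _ i j hne hlink
    exact Bform_adm hadm (hH_le t) (hg_mem t) hne hlink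
  · -- prime power order
    intro t ht
    set p := ps.get ⟨t, ht⟩ with hp_def
    refine ⟨p, (hprime t ht).isPrimePow, ?_, ?_⟩
    · intro i
      rw [hgp t ht]
      exact orbitH_eq_of_mem (mem_orbitH.2 ⟨σ ^ m t, Subgroup.mem_zpowers _, rfl⟩)
    · intro c' hc'0 hfix'
      by_contra hlt
      push_neg at hlt
      have hmt0 : m t ≠ 0 := by
        have := hd_pos t
        have h1 : m t * d t = n := Nat.div_mul_cancel (hd_dvd t)
        intro h0
        rw [h0, zero_mul] at h1
        omega
      refine Stmt3Aux3.no_small_period σ (hprime t ht) (hm_dvd t)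
        ⟨m (t + 1), hm_succ t ht⟩ hmt0 hc'0 hlt ?_
      intro i
      have hii : i ∈ orbitH (H t) ((g t ^ c') i) := by
        rw [hfix' i]
        exact self_mem_orbitH (H t) i
      obtain ⟨h, hh, hhi⟩ := mem_orbitH.1 hii
      obtain ⟨z, hz⟩ := Subgroup.mem_zpowers_iff.1 hh
      refine ⟨z, ?_⟩
      have hmp : m t / p = m (t + 1) := by
        rw [hm_succ t ht, Nat.mul_div_cancel_left _ (hprime t ht).pos]
      rw [hmp, hz]
      exact hhi
  · -- orbits of σ_t are H_{t+1}-orbits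
    intro t ht i j
    constructor
    · rintro ⟨nz, heq⟩
      have hj : j ∈ orbitH (H t) ((g t ^ nz) i) := by
        rw [heq]; exact self_mem_orbitH (H t) j
      obtain ⟨h, hh, hhj⟩ := mem_orbitH.1 hj
      have hmem : h * (g t) ^ nz ∈ H (t + 1) :=
        mul_mem (hH_mono t ht hh) (Subgroup.zpow_mem _ (Subgroup.mem_zpowers _) nz)
      have hj2 : j ∈ orbitH (H (t + 1)) i :=
        mem_orbitH.2 ⟨h * (g t) ^ nz, hmem, by rw [Equiv.Perm.mul_apply]; exact hhj⟩
      exact (orbitH_eq_of_mem hj2).symm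
    · intro heq
      have hj : j ∈ orbitH (H (t + 1)) i := by
        rw [heq]; exact self_mem_orbitH _ j
      obtain ⟨h, hh, rfl⟩ := mem_orbitH.1 hj
      obtain ⟨z, hz⟩ := Subgroup.mem_zpowers_iff.1 hh
      exact ⟨z, by rw [hz]⟩
  · -- induced datum formulas
    intro t ht
    constructor
    · intro i
      exact Bform_step_diag hform (hH_le t) (hH_le (t + 1)) (hH_mono t ht) i
    · intro i j hne
      exact Bform_step_off (hH_mono t ht) i j hne
  · -- B k diag
    intro i
    rw [hHk]
    show Bform form (orbitH (Subgroup.zpowers σ) i) (orbitH (Subgroup.zpowers σ) i) = _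
    rw [Bform_diag hform le_rfl i, orbitF_eq σ i]
  · -- B k offdiag
    intro i j hne
    rw [hHk] at hne ⊢
    show Bform form (orbitH (Subgroup.zpowers σ) i) (orbitH (Subgroup.zpowers σ) j) = _
    rw [orbitF_eq σ i, orbitF_eq σ j, Bform, if_neg hne]
end
end

section
/- For all integers r ≥ 1, t with 1 ≤ t ≤ r, and arbitrary k ∈ ℤ, the identity Σ_{s=0}^{r} (−1)^s [r ¦ s] · [t+k−s−1 ¦ t−1] · [r+k−s ¦ r−t] = 0 holds in ℚ(q). -/
noncomputable section

open Finset

/-- The field `ℚ(q)` of rational functions. -/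
abbrev K : Type := RatFunc ℚ

/-- The variable `q`. -/
def q : K := RatFunc.X

/-- The balanced `q`-integer `[n] = (q^n - q^{-n})/(q - q^{-1})`. -/
def qint (n : ℤ) : K := (q ^ n - q ^ (-n)) / (q - q⁻¹)

/-- The `q`-factorial `[m]! = [1][2]⋯[m]`. -/
def qfact (m : ℕ) : K := ∏ t ∈ Finset.range m, qint (t + 1)

/-- The `q`-binomial coefficient `[n ¦ m] = [n][n-1]⋯[n-m+1]/[m]!`. -/
def qbinom (n : ℤ) (m : ℕ) : K := (∏ t ∈ Finset.range m, qint (n - t)) / qfact m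

lemma hq0 : q ≠ 0 := RatFunc.X_ne_zero

lemma q_pow_ne_one {m : ℕ} (hm : m ≠ 0) : (q : K) ^ m ≠ 1 := by
  intro h
  have h2 : (Polynomial.X : Polynomial ℚ) ^ m = 1 := by
    apply RatFunc.algebraMap_injective ℚ
    simpa [q, map_pow, RatFunc.algebraMap_X] using h
  have := congrArg Polynomial.natDegree h2
  simp [Polynomial.natDegree_X_pow] at this
  exact hm this

lemma q_zpow_eq_one {n : ℤ} (h : q ^ n = 1) : n = 0 := by
  rcases lt_trichotomy n 0 with hn | hn | hn
  · exfalso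
    have h' : q ^ (-n) = 1 := by rw [zpow_neg, h, inv_one]
    have : q ^ (-n).toNat = (1:K) := by
      rw [← zpow_natCast, Int.toNat_of_nonneg (by omega)]; exact h'
    exact q_pow_ne_one (by omega) this
  · exact hn
  · exfalso
    have : q ^ n.toNat = (1:K) := by
      rw [← zpow_natCast, Int.toNat_of_nonneg (by omega)]; exact h
    exact q_pow_ne_one (by omega) this

lemma hnum {n : ℤ} (hn : n ≠ 0) : q ^ n - q ^ (-n) ≠ 0 := by
  intro h
  have h1 : q ^ n = q ^ (-n) := sub_eq_zero.mp h
  have h2 : q ^ (n - -n) = 1 := by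
    rw [zpow_sub₀ hq0, h1, div_self (zpow_ne_zero _ hq0)]
  have := q_zpow_eq_one h2
  omega

lemma hu : q - q⁻¹ ≠ 0 := by
  have := hnum (n := 1) one_ne_zero
  simpa using this

lemma qint_ne_zero {n : ℤ} (hn : n ≠ 0) : qint n ≠ 0 :=
  div_ne_zero (hnum hn) hu

lemma qint_zero : qint 0 = 0 := by simp [qint]

lemma qfact_ne_zero (m : ℕ) : qfact m ≠ 0 := by
  rw [qfact]
  apply Finset.prod_ne_zero_iff.mpr
  intro t _
  exact qint_ne_zero (by positivity)

lemma qbinom_zero (n : ℤ) : qbinom n 0 = 1 := by simp [qbinom, qfact]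

lemma qbinom_self_succ (r : ℕ) : qbinom (r : ℤ) (r + 1) = 0 := by
  rw [qbinom]
  rw [Finset.prod_eq_zero (Finset.self_mem_range_succ r) (by simp [qint_zero])]
  simp

lemma qint_pascal (n m : ℤ) : qint n = q ^ (-m) * qint (n - m) + q ^ (n - m) * qint m := by
  have hqn : q ^ n ≠ 0 := zpow_ne_zero n hq0
  have hqm : q ^ m ≠ 0 := zpow_ne_zero m hq0
  have e : ∀ a : ℤ, qint a = (q ^ a - q ^ (-a)) / (q - q⁻¹) := fun a => rfl
  rw [eq_comm, e, e, e, ← mul_div_assoc, ← mul_div_assoc, ← add_div,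
    div_eq_div_iff hu hu]
  simp only [zpow_neg, zpow_sub₀ hq0]
  field_simp
  ring

lemma qbinom_pascal (n : ℤ) (m : ℕ) :
    qbinom n (m+1) = q ^ (-((m:ℤ)+1)) * qbinom (n-1) (m+1) + q ^ (n-((m:ℤ)+1)) * qbinom (n-1) m := by
  have hP1 : ∏ x ∈ range (m+1), qint (n - x) = qint n * ∏ x ∈ range m, qint (n - 1 - x) := by
    rw [Finset.prod_range_succ', mul_comm]
    congr 1
    · simp
    · apply Finset.prod_congr rfl; intro i _; congr 1; push_cast; ring
  have hP2 : ∏ x ∈ range (m+1), qint (n - 1 - x) =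
      (∏ x ∈ range m, qint (n - 1 - x)) * qint (n - ((m:ℤ)+1)) := by
    rw [Finset.prod_range_succ]
    congr 1
    push_cast; ring
  have hF : qfact (m+1) = qfact m * qint ((m:ℤ) + 1) := by
    rw [qfact, qfact, Finset.prod_range_succ]
  set P := ∏ x ∈ range m, qint (n - 1 - x) with hP
  have hfm : qfact m ≠ 0 := qfact_ne_zero m
  have hqm1 : qint ((m:ℤ)+1) ≠ 0 := qint_ne_zero (by positivity)
  simp only [qbinom, hP1, hP2, hF]
  have main : qint n * P =
      q ^ (-((m:ℤ)+1)) * (P * qint (n - ((m:ℤ)+1))) + q ^ (n-((m:ℤ)+1)) * qint ((m:ℤ)+1) * P := by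
    rw [qint_pascal n ((m:ℤ)+1)]; ring
  rw [main, add_div]
  congr 1
  · rw [mul_div_assoc]
  · rw [show q ^ (n-((m:ℤ)+1)) * qint ((m:ℤ)+1) * P = (q ^ (n-((m:ℤ)+1)) * P) * qint ((m:ℤ)+1) by ring,
      mul_div_mul_right _ _ hqm1, mul_div_assoc]

lemma lemS (r : ℕ) (m : ℤ) :
    ∑ s ∈ range (r+2), (-1:K)^s * qbinom ((r:ℤ)+1) s * q ^ (m * s) =
      (1 - q ^ (m + r)) * ∑ s ∈ range (r+1), (-1:K)^s * qbinom (r:ℤ) s * q ^ ((m-1) * s) := by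
  have hg : ∀ i : ℕ, i ∈ range (r+1) →
      (-1:K)^(i+1) * qbinom ((r:ℤ)+1) (i+1) * q ^ (m * (i+1)) =
        (-1:K)^(i+1) * qbinom (r:ℤ) (i+1) * q ^ ((m-1) * (i+1))
          - q ^ (m + r) * ((-1:K)^i * qbinom (r:ℤ) i * q ^ ((m-1) * i)) := by
    intro i _
    have hp := qbinom_pascal ((r:ℤ)+1) i
    have e1 : ((r:ℤ)+1-1) = (r:ℤ) := by ring
    rw [e1] at hp
    rw [hp]
    have e2 : q ^ (-((i:ℤ)+1)) * q ^ (m * ((i:ℤ)+1)) = q ^ ((m-1) * ((i:ℤ)+1)) := by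
      rw [← zpow_add₀ hq0]; congr 1; ring
    have e3 : q ^ ((r:ℤ)+1-((i:ℤ)+1)) * q ^ (m * ((i:ℤ)+1)) = q ^ (m + r) * q ^ ((m-1) * (i:ℤ)) := by
      rw [← zpow_add₀ hq0, ← zpow_add₀ hq0]; congr 1; ring
    push_cast
    calc (-1:K)^(i+1) * (q ^ (-((i:ℤ)+1)) * qbinom (r:ℤ) (i+1) + q ^ ((r:ℤ)+1-((i:ℤ)+1)) * qbinom (r:ℤ) i) * q ^ (m * ((i:ℤ)+1))
        = (-1:K)^(i+1) * qbinom (r:ℤ) (i+1) * (q ^ (-((i:ℤ)+1)) * q ^ (m * ((i:ℤ)+1)))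
          + (-1:K)^(i+1) * qbinom (r:ℤ) i * (q ^ ((r:ℤ)+1-((i:ℤ)+1)) * q ^ (m * ((i:ℤ)+1))) := by ring
      _ = _ := by
          rw [e2, e3, pow_succ]
          ring
  rw [Finset.sum_range_succ' _ (r+1)]
  push_cast
  rw [Finset.sum_congr rfl hg]
  rw [Finset.sum_sub_distrib]
  have h0 : (-1:K)^0 * qbinom ((r:ℤ)+1) 0 * q ^ (m * 0) = 1 := by
    simp [qbinom_zero]
  rw [h0]
  have hlast : (∑ i ∈ range (r+1), (-1:K)^(i+1) * qbinom (r:ℤ) (i+1) * q ^ ((m-1) * ((i:ℤ)+1))) + 1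
      = ∑ s ∈ range (r+1), (-1:K)^s * qbinom (r:ℤ) s * q ^ ((m-1) * s) := by
    have e4 : (∑ i ∈ range (r+1), (-1:K)^(i+1) * qbinom (r:ℤ) (i+1) * q ^ ((m-1) * ((i:ℤ)+1))) + 1
        = ∑ s ∈ range (r+2), (-1:K)^s * qbinom (r:ℤ) s * q ^ ((m-1) * s) := by
      rw [Finset.sum_range_succ' _ (r+1)]
      push_cast
      simp [qbinom_zero]
    rw [e4, Finset.sum_range_succ, qbinom_self_succ]
    simp
  rw [← Finset.mul_sum, sub_add_eq_add_sub, hlast]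
  ring

lemma lemA : ∀ r j : ℕ, j < r →
    ∑ s ∈ range (r+1), (-1:K)^s * qbinom (r:ℤ) s * q ^ (((r:ℤ) - 1 - 2*j) * s) = 0 := by
  intro r
  induction r with
  | zero => intro j hj; omega
  | succ r ih =>
    intro j hj
    have e : ∀ s : ℕ, (((r:ℤ)+1) - 1 - 2*j) * s = ((r:ℤ) - 2*j) * s := by intro s; ring
    have h := lemS r ((r:ℤ) - 2*j)
    have goalrw : ∑ s ∈ range (r+1+1), (-1:K)^s * qbinom ((r:ℤ)+1) s * q ^ ((((r:ℕ)+1:ℤ) - 1 - 2*j) * s)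
        = ∑ s ∈ range (r+2), (-1:K)^s * qbinom ((r:ℤ)+1) s * q ^ (((r:ℤ) - 2*j) * s) := by
      apply Finset.sum_congr rfl; intro s _; congr 2; push_cast; ring
    push_cast
    push_cast at goalrw
    rw [goalrw, h]
    rcases eq_or_lt_of_le (Nat.lt_succ_iff.mp hj) with hjr | hjr
    · have : (r:ℤ) - 2*j + r = 0 := by rw [hjr]; push_cast; ring
      rw [this, zpow_zero, sub_self, zero_mul]
    · have e2 : ∑ s ∈ range (r+1), (-1:K)^s * qbinom (r:ℤ) s * q ^ (((r:ℤ) - 2*j - 1) * s)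
          = ∑ s ∈ range (r+1), (-1:K)^s * qbinom (r:ℤ) s * q ^ (((r:ℤ) - 1 - 2*j) * s) := by
        apply Finset.sum_congr rfl; intro s _; congr 2; ring
      rw [e2, ih j hjr, mul_zero]

lemma prodComb (d : ℕ) (a : ℕ → ℤ) : ∃ c : ℕ → K, ∀ s : ℤ,
    ∏ i ∈ range d, qint (a i - s) = ∑ j ∈ range (d+1), c j * q ^ (((d:ℤ) - 2*j) * s) := by
  induction d with
  | zero => exact ⟨fun _ => 1, fun s => by simp⟩
  | succ d ih =>
    obtain ⟨c, hc⟩ := ih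
    refine ⟨fun j => (q ^ (a d) * (if 1 ≤ j then c (j-1) else 0)
      - q ^ (-(a d)) * (if j ≤ d then c j else 0)) / (q - q⁻¹), fun s => ?_⟩
    rw [Finset.prod_range_succ, hc]
    have expand : (∑ j ∈ range (d+1), c j * q ^ (((d:ℤ) - 2*j) * s)) * qint (a d - s)
        = ∑ j ∈ range (d+1),
            (q ^ (a d) * c j * q ^ ((((d:ℕ)+1:ℤ) - 2*((j:ℤ)+1)) * s)
             - q ^ (-(a d)) * c j * q ^ ((((d:ℕ)+1:ℤ) - 2*j) * s)) / (q - q⁻¹) := by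
      rw [Finset.sum_mul]
      apply Finset.sum_congr rfl
      intro j _
      have hq1 : qint (a d - s) = (q ^ (a d - s) - q ^ (s - a d)) / (q - q⁻¹) := by
        rw [qint]; congr 2; ring
      rw [hq1, ← mul_div_assoc]
      congr 1
      have eA : q ^ (((d:ℤ) - 2*(j:ℤ))*s) * q ^ (a d - s)
          = q ^ (a d) * q ^ ((((d:ℕ)+1:ℤ) - 2*((j:ℤ)+1)) * s) := by
        rw [← zpow_add₀ hq0, ← zpow_add₀ hq0]; congr 1; push_cast; ring
      have eB : q ^ (((d:ℤ) - 2*(j:ℤ))*s) * q ^ (s - a d)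
          = q ^ (-(a d)) * q ^ ((((d:ℕ)+1:ℤ) - 2*(j:ℤ)) * s) := by
        rw [← zpow_add₀ hq0, ← zpow_add₀ hq0]; congr 1; push_cast; ring
      linear_combination (c j) * eA - (c j) * eB
    rw [expand]
    have split : ∀ j ∈ range (d+2),
        (q ^ (a d) * (if 1 ≤ j then c (j-1) else 0)
          - q ^ (-(a d)) * (if j ≤ d then c j else 0)) / (q - q⁻¹)
            * q ^ ((((d:ℕ)+1:ℤ) - 2*j) * s)
        = (q ^ (a d) * (if 1 ≤ j then c (j-1) else 0)) * q ^ ((((d:ℕ)+1:ℤ) - 2*j) * s) / (q - q⁻¹)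
          - (q ^ (-(a d)) * (if j ≤ d then c j else 0)) * q ^ ((((d:ℕ)+1:ℤ) - 2*j) * s) / (q - q⁻¹) := by
      intro j _; ring
    have first : ∑ j ∈ range (d+2),
        (q ^ (a d) * (if 1 ≤ j then c (j-1) else 0)) * q ^ ((((d:ℕ)+1:ℤ) - 2*j) * s) / (q - q⁻¹)
        = ∑ j ∈ range (d+1),
            q ^ (a d) * c j * q ^ ((((d:ℕ)+1:ℤ) - 2*((j:ℤ)+1)) * s) / (q - q⁻¹) := by
      rw [Finset.sum_range_succ' _ (d+1)]
      rw [if_neg (by omega : ¬ (1:ℕ) ≤ 0), mul_zero, zero_mul, zero_div, add_zero]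
      apply Finset.sum_congr rfl
      intro i _
      rw [if_pos (by omega : 1 ≤ i + 1), Nat.add_sub_cancel]
      norm_cast
    have second : ∑ j ∈ range (d+2),
        (q ^ (-(a d)) * (if j ≤ d then c j else 0)) * q ^ ((((d:ℕ)+1:ℤ) - 2*j) * s) / (q - q⁻¹)
        = ∑ j ∈ range (d+1),
            q ^ (-(a d)) * c j * q ^ ((((d:ℕ)+1:ℤ) - 2*(j:ℤ)) * s) / (q - q⁻¹) := by
      rw [Finset.sum_range_succ]
      rw [if_neg (by omega : ¬ d + 1 ≤ d), mul_zero, zero_mul, zero_div, add_zero]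
      apply Finset.sum_congr rfl
      intro i hi
      rw [if_pos (by simpa [Nat.lt_succ_iff] using (Finset.mem_range.mp hi))]
    symm
    push_cast
    rw [Finset.sum_congr rfl split, Finset.sum_sub_distrib, first, second,
      ← Finset.sum_sub_distrib]
    apply Finset.sum_congr rfl
    intro j _
    rw [div_sub_div_same]

/-- for all integers `r ≥ 1`, `1 ≤ t ≤ r`, and arbitrary `k ∈ ℤ`,
`Σ_{s=0}^{r} (−1)^s [r ¦ s] [t+k−s−1 ¦ t−1] [r+k−s ¦ r−t] = 0` in `ℚ(q)`. -/
theorem stmt7 (r t : ℕ) (hr : 1 ≤ r) (ht1 : 1 ≤ t) (htr : t ≤ r) (k : ℤ) :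
    ∑ s ∈ Finset.range (r + 1),
      (-1 : K) ^ s * qbinom (r : ℤ) s * qbinom ((t : ℤ) + k - (s : ℤ) - 1) (t - 1) *
        qbinom ((r : ℤ) + k - (s : ℤ)) (r - t) = 0 := by
  obtain ⟨c, hc⟩ := prodComb (r-1)
    (fun i => if i < t - 1 then (t:ℤ) + k - 1 - i else (r:ℤ) + k - i + ((t:ℤ) - 1))
  have hr1 : r - 1 + 1 = r := by omega
  have hcast : ((r-1:ℕ):ℤ) = (r:ℤ) - 1 := by
    rw [Nat.cast_sub hr]; norm_num
  rw [hr1, hcast] at hc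
  set F := qfact (t-1) * qfact (r-t) with hF
  have hkey : ∀ s : ℕ, qbinom ((t:ℤ)+k-(s:ℤ)-1) (t-1) * qbinom ((r:ℤ)+k-(s:ℤ)) (r-t)
      = (∑ j ∈ range r, c j * q ^ (((r:ℤ)-1-2*(j:ℤ)) * (s:ℤ))) / F := by
    intro s
    have hprod : ∏ i ∈ range (r-1),
        qint ((if i < t-1 then (t:ℤ)+k-1-(i:ℤ) else (r:ℤ)+k-(i:ℤ)+((t:ℤ)-1)) - (s:ℤ))
        = (∏ i ∈ range (t-1), qint (((t:ℤ)+k-(s:ℤ)-1) - (i:ℤ)))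
          * ∏ i ∈ range (r-t), qint (((r:ℤ)+k-(s:ℤ)) - (i:ℤ)) := by
      rw [show r - 1 = (t-1) + (r-t) by omega, Finset.prod_range_add]
      congr 1
      · apply Finset.prod_congr rfl; intro i hi
        rw [if_pos (mem_range.mp hi)]
        congr 1; ring
      · apply Finset.prod_congr rfl; intro i hi
        rw [if_neg (by omega)]
        congr 1
        have : ((t - 1 + i : ℕ) : ℤ) = (t:ℤ) - 1 + i := by
          push_cast [Nat.cast_sub ht1]; ring
        rw [this]; ring
    rw [qbinom, qbinom, div_mul_div_comm, ← hprod, hc (s:ℤ)]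
  have step : ∀ s ∈ range (r+1),
      (-1:K)^s * qbinom (r:ℤ) s * qbinom ((t:ℤ)+k-(s:ℤ)-1) (t-1) * qbinom ((r:ℤ)+k-(s:ℤ)) (r-t)
      = ∑ j ∈ range r, (c j / F) * ((-1:K)^s * qbinom (r:ℤ) s * q ^ (((r:ℤ)-1-2*(j:ℤ)) * (s:ℤ))) := by
    intro s _
    rw [mul_assoc, hkey s, Finset.sum_div, Finset.mul_sum]
    apply Finset.sum_congr rfl
    intro j _
    ring
  rw [Finset.sum_congr rfl step, Finset.sum_comm]
  apply Finset.sum_eq_zero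
  intro j hj
  rw [← Finset.mul_sum, lemA r j (mem_range.mp hj), mul_zero]
end
end
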